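/- Let χ be a non-principal primitive Dirichlet character of odd modulus k, and let p ≥ 1 be odd and 1 ≤ m ≤ p. Then Σ_{n=1}^{k} χ̄(n) 𝔅_{p+1−m,χ̄}(−kn/2) ℰ_{m−1}(n/k) = k^{1−m} 2^{m−p−2} χ̄(2) (p+1−m) ℰ_{p−m,χ̄}(k) ℰ_{m−1,χ}(0). -/

import Mathlib

open Finset

/-- Bernoulli polynomial evaluated on ℝ. -/
noncomputable def bernPoly (n : ℕ) (x : ℝ) : ℝ :=
  ((Polynomial.bernoulli n).map (algebraMap ℚ ℝ)).eval x

/-- Periodic Bernoulli function 𝔅ₙ (with 𝔅₁ vanishing at integers). -/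
noncomputable def pB (n : ℕ) (x : ℝ) : ℝ :=
  if n = 1 ∧ Int.fract x = 0 then 0 else bernPoly n (Int.fract x)

/-- Euler polynomial Eₙ (via the standard Bernoulli identity). -/
noncomputable def eulerPoly (n : ℕ) (x : ℝ) : ℝ :=
  2 ^ (n + 1) / (n + 1) * (bernPoly (n + 1) ((x + 1) / 2) - bernPoly (n + 1) (x / 2))

/-- Periodic Euler function ℰₙ, with ℰₙ(x+m) = (-1)^m ℰₙ(x). -/
noncomputable def pE (n : ℕ) (x : ℝ) : ℝ :=
  (-1 : ℝ) ^ ⌊x⌋ * eulerPoly n (Int.fract x)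

/-- Conjugate Dirichlet character χ̄. -/
noncomputable def conjChar {k : ℕ} (χ : DirichletCharacter ℂ k) : DirichletCharacter ℂ k :=
  χ.ringHomComp (starRingEnd ℂ)

/-- Generalized Bernoulli function 𝔅_{m,χ}(x) = k^{m-1} Σ_{j=0}^{k-1} χ̄(j) 𝔅_m((j+x)/k). -/
noncomputable def genB {k : ℕ} (χ : DirichletCharacter ℂ k) (m : ℕ) (x : ℝ) : ℂ :=
  (k : ℂ) ^ ((m : ℤ) - 1) *
    ∑ j ∈ Finset.range k, conjChar χ j * ((pB m ((j + x) / k) : ℝ) : ℂ)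

/-- Character Euler function ℰ_{m,χ}(x) = k^m Σ_{j=0}^{k-1} (-1)^j χ̄(j) ℰ_m((j+x)/k). -/
noncomputable def genE {k : ℕ} (χ : DirichletCharacter ℂ k) (m : ℕ) (x : ℝ) : ℂ :=
  (k : ℂ) ^ m *
    ∑ j ∈ Finset.range k, (-1 : ℂ) ^ j * conjChar χ j * ((pE m ((j + x) / k) : ℝ) : ℂ)

/-- Character Hardy–Berndt sum s_{1,p}(d,c:χ). -/
noncomputable def s1p {k : ℕ} (χ : DirichletCharacter ℂ k) (p d c : ℕ) : ℂ :=
  ∑ n ∈ Finset.Icc 1 (c * k),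
    χ n * genE χ (p - 1) ((d : ℝ) * n / c) * ((pB 1 ((n : ℝ) / ((c : ℝ) * k)) : ℝ) : ℂ)

/-- Character Hardy–Berndt sum s_{2,p}(d,c:χ). -/
noncomputable def s2p {k : ℕ} (χ : DirichletCharacter ℂ k) (p d c : ℕ) : ℂ :=
  ∑ n ∈ Finset.Icc 1 (c * k),
    (-1 : ℂ) ^ n * χ n * genB χ p ((d : ℝ) * n / c) * ((pB 1 ((n : ℝ) / ((c : ℝ) * k)) : ℝ) : ℂ)

/-- Character Hardy–Berndt sum s_{5,p}(d,c:χ). -/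
noncomputable def s5p {k : ℕ} (χ : DirichletCharacter ℂ k) (p d c : ℕ) : ℂ :=
  ∑ n ∈ Finset.Icc 1 (c * k),
    (-1 : ℂ) ^ n * χ n * genE χ (p - 1) ((d : ℝ) * n / c) * ((pB 1 ((n : ℝ) / ((c : ℝ) * k)) : ℝ) : ℂ)


section Aux
open PowerSeries Polynomial


noncomputable def BF (t : ℝ) : PowerSeries ℝ :=
  PowerSeries.mk fun n => Polynomial.aeval t ((1 / (n.factorial : ℚ)) • Polynomial.bernoulli n)

lemma BF_gen (t : ℝ) : BF t * (exp ℝ - 1) = PowerSeries.X * rescale t (exp ℝ) :=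
  Polynomial.bernoulli_generating_function t

lemma exp_sub_one_ne : (exp ℝ - 1) ≠ 0 := by
  intro h
  have := congrArg (PowerSeries.coeff 1) h
  simp [coeff_exp] at this

lemma exp_eq_rescale_one : exp ℝ = rescale (1 : ℝ) (exp ℝ) := by rw [rescale_one]; rfl

lemma rescale_exp_zero : rescale (0 : ℝ) (exp ℝ) = 1 := by
  rw [rescale_zero]; simp

lemma BF_reflect (t : ℝ) : BF (1 - t) = rescale (-1 : ℝ) (BF t) := by
  apply mul_right_cancel₀ exp_sub_one_ne
  rw [BF_gen]
  have h1 := congrArg (rescale (-1 : ℝ)) (BF_gen t)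
  rw [map_mul, map_mul, map_sub, map_one, rescale_rescale, rescale_X] at h1
  -- multiply h1 by exp
  have h2 : (rescale (-1 : ℝ) (exp ℝ) - 1) * exp ℝ = -(exp ℝ - 1) := by
    rw [sub_mul, one_mul]
    nth_rewrite 2 [exp_eq_rescale_one]
    rw [exp_mul_exp_eq_exp_add]
    norm_num [rescale_exp_zero]
  have h3 := congrArg (· * exp ℝ) h1
  simp only [mul_assoc] at h3
  rw [h2] at h3
  have h4 : rescale (t * -1 : ℝ) (exp ℝ) * exp ℝ = rescale (1 - t : ℝ) (exp ℝ) := by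
    nth_rewrite 2 [exp_eq_rescale_one]
    rw [exp_mul_exp_eq_exp_add]
    ring_nf
  rw [h4] at h3
  have h5 : (PowerSeries.C (-1) : ℝ⟦X⟧) * (PowerSeries.X * rescale (1 - t : ℝ) (exp ℝ))
      = -(PowerSeries.X * rescale (1 - t : ℝ) (exp ℝ)) := by
    simp
  rw [mul_neg, h5] at h3
  have := h3
  exact (neg_injective this).symm

lemma BF_dup (t : ℝ) : BF (t / 2) + BF ((t + 1) / 2) = 2 • rescale (2⁻¹ : ℝ) (BF t) := by
  apply mul_right_cancel₀ exp_sub_one_ne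
  set E := rescale (2⁻¹ : ℝ) (exp ℝ) with hE
  have hEE : E * E = exp ℝ := by
    rw [hE, exp_mul_exp_eq_exp_add]; norm_num
  have hres := congrArg (rescale (2⁻¹ : ℝ)) (BF_gen t)
  rw [map_mul, map_mul, map_sub, map_one, rescale_rescale, rescale_X] at hres
  -- hres : rescale 2⁻¹ (BF t) * (E - 1) = (C 2⁻¹ * X) * rescale (t * 2⁻¹) exp
  have key : (2 • rescale (2⁻¹ : ℝ) (BF t)) * (exp ℝ - 1)
      = 2 • ((rescale (2⁻¹ : ℝ) (BF t) * (E - 1)) * (E + 1)) := by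
    rw [← hEE]
    rw [smul_mul_assoc]
    congr 1
    ring
  rw [key, hres]
  rw [add_mul, BF_gen, BF_gen]
  have hA : rescale (t * 2⁻¹ : ℝ) (exp ℝ) * E = rescale ((t+1) / 2 : ℝ) (exp ℝ) := by
    rw [hE, exp_mul_exp_eq_exp_add]; ring_nf
  have h2 : (2:ℕ) • (((PowerSeries.C 2⁻¹ * PowerSeries.X) * rescale (t * 2⁻¹ : ℝ) (exp ℝ)) * (E + 1))
      = PowerSeries.X * rescale (t/2 : ℝ) (exp ℝ) + PowerSeries.X * rescale ((t+1)/2 : ℝ) (exp ℝ) := by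
    rw [mul_add, mul_one]
    rw [smul_add]
    have hC : (2:ℕ) • ((PowerSeries.C 2⁻¹ * PowerSeries.X) : PowerSeries ℝ) = PowerSeries.X := by
      rw [nsmul_eq_mul]
      rw [← mul_assoc]
      norm_num
      rw [show ((2:ℝ⟦X⟧)) = PowerSeries.C 2 by simp [map_ofNat]]
      rw [← map_mul]
      norm_num
    calc (2:ℕ) • ((PowerSeries.C 2⁻¹ * PowerSeries.X) * rescale (t * 2⁻¹ : ℝ) (exp ℝ) * E)
        + (2:ℕ) • ((PowerSeries.C 2⁻¹ * PowerSeries.X) * rescale (t * 2⁻¹ : ℝ) (exp ℝ))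
        = ((2:ℕ) • ((PowerSeries.C 2⁻¹ * PowerSeries.X))) * (rescale (t * 2⁻¹ : ℝ) (exp ℝ) * E)
        + ((2:ℕ) • ((PowerSeries.C 2⁻¹ * PowerSeries.X))) * rescale (t * 2⁻¹ : ℝ) (exp ℝ) := by
          simp [smul_mul_assoc, mul_assoc]
      _ = PowerSeries.X * rescale ((t+1)/2 : ℝ) (exp ℝ) + PowerSeries.X * rescale (t/2 : ℝ) (exp ℝ) := by
          rw [hC, hA]
          ring_nf
      _ = _ := by ring
  rw [← h2]

lemma bernPoly_eq_aeval (n : ℕ) (x : ℝ) : bernPoly n x = Polynomial.aeval x (Polynomial.bernoulli n) := by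
  rw [bernPoly, Polynomial.eval_map, Polynomial.aeval_def]

lemma coeff_BF (n : ℕ) (t : ℝ) :
    PowerSeries.coeff n (BF t) = ((n.factorial : ℝ))⁻¹ * bernPoly n t := by
  rw [BF, PowerSeries.coeff_mk, map_smul, bernPoly_eq_aeval, Algebra.smul_def]
  congr 1
  rw [show ((1:ℚ) / n.factorial) = (n.factorial : ℚ)⁻¹ by norm_num]
  simp [map_inv₀]

lemma bernPoly_one_sub (n : ℕ) (x : ℝ) : bernPoly n (1 - x) = (-1)^n * bernPoly n x := by
  have h := congrArg (PowerSeries.coeff n) (BF_reflect x)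
  rw [coeff_BF, PowerSeries.coeff_rescale, coeff_BF] at h
  have hf : ((n.factorial : ℝ)) ≠ 0 := by positivity
  apply mul_left_cancel₀ (inv_ne_zero hf)
  linear_combination h

lemma bernPoly_dup (n : ℕ) (x : ℝ) :
    bernPoly n (x/2) + bernPoly n ((x+1)/2) = 2 * (2⁻¹:ℝ)^n * bernPoly n x := by
  have h := congrArg (PowerSeries.coeff n) (BF_dup x)
  rw [map_add, coeff_BF, coeff_BF, map_nsmul, PowerSeries.coeff_rescale, coeff_BF] at h
  simp only [nsmul_eq_mul, Nat.cast_ofNat] at h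
  have hf : ((n.factorial : ℝ)) ≠ 0 := by positivity
  apply mul_left_cancel₀ (inv_ne_zero hf)
  linear_combination h

lemma pB_eq_bern {n : ℕ} {x : ℝ} (h : Int.fract x ≠ 0) : pB n x = bernPoly n (Int.fract x) := by
  rw [pB, if_neg]; tauto

lemma pB_add_int (n : ℕ) (x : ℝ) (z : ℤ) : pB n (x + z) = pB n x := by
  rw [pB, pB, Int.fract_add_intCast]

lemma pB_add_nat (n : ℕ) (x : ℝ) (c : ℕ) : pB n (x + c) = pB n x := by
  rw [show ((c:ℝ)) = ((c:ℤ):ℝ) by push_cast; ring, pB_add_int]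

lemma pB_of_Ioo {n : ℕ} {x : ℝ} (h0 : 0 < x) (h1 : x < 1) : pB n x = bernPoly n x := by
  have hf : Int.fract x = x := Int.fract_eq_self.mpr ⟨le_of_lt h0, h1⟩
  rw [pB_eq_bern (by rw [hf]; exact ne_of_gt h0), hf]

lemma pB_neg {n : ℕ} {x : ℝ} (hx : Int.fract x ≠ 0) : pB n (-x) = (-1)^n * pB n x := by
  have h1 : Int.fract (-x) = 1 - Int.fract x := Int.fract_neg hx
  have h2 : Int.fract (-x) ≠ 0 := by rw [h1]; have := Int.fract_lt_one x; intro h; nlinarith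
  rw [pB_eq_bern h2, pB_eq_bern hx, h1, bernPoly_one_sub]

lemma pE_add_nat (n : ℕ) (x : ℝ) (c : ℕ) : pE n (x + c) = (-1)^c * pE n x := by
  rw [pE, pE, Int.floor_add_natCast, Int.fract_add_natCast]
  rw [zpow_add₀ (by norm_num : (-1:ℝ) ≠ 0), zpow_natCast]
  ring

lemma pE_of_Ico {n : ℕ} {x : ℝ} (h0 : 0 ≤ x) (h1 : x < 1) : pE n x = eulerPoly n x := by
  have hfl : ⌊x⌋ = 0 := Int.floor_eq_zero_iff.mpr ⟨h0, h1⟩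
  have hf : Int.fract x = x := Int.fract_eq_self.mpr ⟨h0, h1⟩
  rw [pE, hfl, hf, zpow_zero, one_mul]

lemma eulerPoly_one_sub (n : ℕ) (x : ℝ) : eulerPoly n (1 - x) = (-1)^n * eulerPoly n x := by
  rw [eulerPoly, eulerPoly]
  rw [show ((1 - x) + 1)/2 = 1 - x/2 by ring, show (1 - x)/2 = 1 - (x+1)/2 by ring,
    bernPoly_one_sub, bernPoly_one_sub]
  rw [pow_succ]
  ring

lemma pB_half_diff (n : ℕ) {x : ℝ} (h0 : 0 < x) (h1 : x < 1) (hh : x ≠ 1/2) :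
    pB (n+1) (x + 1/2) - pB (n+1) x = (((n:ℝ)+1)/2^(n+1)) * pE n (2*x) := by
  have hn1 : ((n:ℝ)+1) ≠ 0 := by positivity
  have hp2 : (2:ℝ)^(n+1) ≠ 0 := by positivity
  rcases lt_or_gt_of_ne hh with hlt | hgt
  · rw [pB_of_Ioo (by linarith) (by linarith), pB_of_Ioo h0 h1,
      pE_of_Ico (by linarith) (by linarith), eulerPoly,
      show (2*x+1)/2 = x + 1/2 by ring, show (2*x)/2 = x by ring]
    push_cast
    field_simp
  · have hfr : Int.fract (x + 1/2) = x - 1/2 := by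
      rw [show x + 1/2 = (x - 1/2) + 1 by ring, Int.fract_add_one,
        Int.fract_eq_self.mpr ⟨by linarith, by linarith⟩]
    rw [pB_eq_bern (by rw [hfr]; intro h; apply hh; linarith), hfr, pB_of_Ioo h0 h1]
    rw [show 2*x = (2*x - 1) + (1:ℕ) by push_cast; ring, pE_add_nat,
      pE_of_Ico (by linarith) (by linarith), eulerPoly,
      show ((2*x-1)+1)/2 = x by ring, show (2*x-1)/2 = x - 1/2 by ring]
    push_cast
    field_simp
    ring

lemma fract_ne_zero_of {x : ℝ} (h1 : -1 < x) (h2 : x < 1) (h3 : x ≠ 0) : Int.fract x ≠ 0 := by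
  rcases le_or_gt 0 x with h | h
  · rw [Int.fract_eq_self.mpr ⟨h, h2⟩]; exact h3
  · have hfl : ⌊x⌋ = -1 := by
      apply Int.floor_eq_iff.mpr
      constructor <;> push_cast <;> linarith
    rw [Int.fract, hfl]
    push_cast
    intro hc
    linarith

lemma sum_range_eq_Icc (k : ℕ) (f : ℕ → ℂ) (h0 : f 0 = 0) :
    ∑ j ∈ Finset.range k, f j = ∑ j ∈ Finset.Icc 1 (k-1), f j := by
  rcases Nat.eq_zero_or_pos k with rfl | hk
  · simp
  · have hIcc : Finset.Ico 1 k = Finset.Icc 1 (k-1) := by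
      rw [← Finset.Ico_add_one_right_eq_Icc]
      congr 1
      omega
    rw [Finset.range_eq_Ico, Finset.sum_eq_sum_Ico_succ_bot hk, h0, zero_add, hIcc]

lemma sum_Icc_eq_range (k : ℕ) (hk : 1 ≤ k) (f : ℕ → ℂ) (h0 : f 0 = 0) (hkk : f k = 0) :
    ∑ n ∈ Finset.Icc 1 k, f n = ∑ n ∈ Finset.range k, f n := by
  rw [show k = (k-1)+1 by omega, Finset.sum_Icc_succ_top (by omega), show (k-1)+1 = k by omega, hkk,
    add_zero, sum_range_eq_Icc k f h0]

lemma sum_reflect (k : ℕ) (f : ℕ → ℂ) :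
    ∑ j ∈ Finset.Icc 1 (k-1), f j = ∑ j ∈ Finset.Icc 1 (k-1), f (k - j) := by
  refine Finset.sum_nbij' (i := fun a => k - a) (j := fun a => k - a) ?_ ?_ ?_ ?_ ?_ <;>
      simp only [Finset.mem_Icc] <;> intro a ha
  · omega
  · omega
  · omega
  · omega
  · rw [show k - (k - a) = a by omega]

lemma conjChar_apply {k : ℕ} (χ : DirichletCharacter ℂ k) (a : ZMod k) :
    conjChar χ a = (starRingEnd ℂ) (χ a) := rfl

lemma conjChar_conjChar_apply {k : ℕ} (χ : DirichletCharacter ℂ k) (a : ZMod k) :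
    conjChar (conjChar χ) a = χ a := by
  rw [conjChar_apply, conjChar_apply, Complex.conj_conj]

lemma conjChar_mul_self {k : ℕ} (χ : DirichletCharacter ℂ k) {a : ZMod k} (ha : IsUnit a) :
    conjChar χ a * χ a = 1 := by
  rw [conjChar_apply, mul_comm, Complex.mul_conj]
  have h1 : ‖χ a‖ = 1 := by
    have := DirichletCharacter.unit_norm_eq_one χ ha.unit
    rwa [IsUnit.unit_spec] at this
  rw [Complex.normSq_eq_norm_sq, h1]
  norm_num

end Aux

theorem stmt19 (k : ℕ) (hk : Odd k) (χ : DirichletCharacter ℂ k) (hχ : χ ≠ 1)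
    (hprim : χ.IsPrimitive) (p m : ℕ) (hp : Odd p) (hm1 : 1 ≤ m) (hmp : m ≤ p) :
    ∑ n ∈ Finset.Icc 1 k, conjChar χ n * genB (conjChar χ) (p + 1 - m) (-((k : ℝ) * n) / 2) *
        ((pE (m - 1) ((n : ℝ) / k) : ℝ) : ℂ) =
      (k : ℂ) ^ ((1 : ℤ) - m) * (2 : ℂ) ^ ((m : ℤ) - p - 2) * conjChar χ 2 *
        ((p + 1 - m : ℕ) : ℂ) * genE (conjChar χ) (p - m) (k : ℝ) * genE χ (m - 1) 0 := by
  classical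
  -- basic numeric facts
  have hk1 : k ≠ 1 := by
    rintro rfl
    exact hχ (DirichletCharacter.level_one χ)
  have hk2 : k % 2 = 1 := Nat.odd_iff.mp hk
  have hk3 : 3 ≤ k := by omega
  have hkR0 : (0:ℝ) < (k:ℝ) := by exact_mod_cast (by omega : 0 < k)
  have hkR : (k:ℝ) ≠ 0 := ne_of_gt hkR0
  have hkC : (k:ℂ) ≠ 0 := Nat.cast_ne_zero.mpr (by omega)
  haveI : NeZero k := ⟨by omega⟩
  haveI : Fact (1 < k) := ⟨by omega⟩
  have h0nu : ¬ IsUnit (0 : ZMod k) := by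
    intro h
    have h01 : (0 : ZMod k) = 1 := isUnit_zero_iff.mp h
    have := congrArg ZMod.val h01
    rw [ZMod.val_zero, ZMod.val_one] at this
    omega
  have hχ00 : χ (0 : ZMod k) = 0 := χ.map_nonunit h0nu
  have hcχ0 : conjChar χ (0 : ZMod k) = 0 := (conjChar χ).map_nonunit h0nu
  have h2u : IsUnit (2 : ZMod k) := by
    have h := (ZMod.isUnit_iff_coprime 2 k).mpr (by simpa using hk)
    simpa using h
  -- replace p + 1 - m by q + 1
  set q := p - m with hqdef
  rw [show p + 1 - m = q + 1 from by omega]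
  -- the five sums
  set Sa := ∑ j ∈ Finset.range k, χ j * ((pB (q+1) ((j:ℝ)/k) : ℝ) : ℂ) with hSa
  set Sb := ∑ j ∈ Finset.range k, χ j * ((pB (q+1) ((j:ℝ)/k + 1/2) : ℝ) : ℂ) with hSb
  set T := ∑ j ∈ Finset.range k, conjChar χ j * ((pE (m-1) ((j:ℝ)/k) : ℝ) : ℂ) with hT
  set U := ∑ j ∈ Finset.range k, (-1:ℂ)^j * conjChar χ j * ((pE (m-1) ((j:ℝ)/k) : ℝ) : ℂ) with hU
  set V := ∑ j ∈ Finset.range k, (-1:ℂ)^j * χ j * ((pE q ((j:ℝ)/k) : ℝ) : ℂ) with hV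
  -- fractional part facts for 1 ≤ j ≤ k-1
  have hjk_pos : ∀ j : ℕ, 1 ≤ j → (0:ℝ) < (j:ℝ)/k := by
    intro j hj
    apply div_pos (by exact_mod_cast (by omega : 0 < j)) hkR0
  have hjk_lt : ∀ j : ℕ, j ≤ k-1 → (j:ℝ)/k < 1 := by
    intro j hj
    rw [div_lt_one hkR0]
    exact_mod_cast (by omega : j < k)
  have hjk_ne_half : ∀ j : ℕ, (j:ℝ)/k ≠ 1/2 := by
    intro j h
    have : (2*j : ℝ) = (k:ℝ) := by field_simp at h; linarith
    have : 2*j = k := by exact_mod_cast this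
    omega
  have hfr : ∀ j : ℕ, 1 ≤ j → j ≤ k-1 → Int.fract ((j:ℝ)/k) ≠ 0 := by
    intro j h1 h2
    rw [Int.fract_eq_self.mpr ⟨le_of_lt (hjk_pos j h1), hjk_lt j h2⟩]
    exact ne_of_gt (hjk_pos j h1)
  have hfr2 : ∀ j : ℕ, 1 ≤ j → j ≤ k-1 → Int.fract ((j:ℝ)/k - 1/2) ≠ 0 := by
    intro j h1 h2
    apply fract_ne_zero_of
    · have := hjk_pos j h1; linarith
    · have := hjk_lt j h2; linarith
    · intro h; apply hjk_ne_half j; linarith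
  -- cast facts
  have hcastZ : ∀ j : ℕ, j ≤ k → (((k-j:ℕ)) : ZMod k) = -(j : ZMod k) := by
    intro j hj
    rw [Nat.cast_sub hj, ZMod.natCast_self]
    ring
  have hcastR : ∀ j : ℕ, j ≤ k → (((k-j:ℕ)) : ℝ) = (k:ℝ) - j := by
    intro j hj
    push_cast [Nat.cast_sub hj]
    ring
  -- character parity
  have hεsq : χ (-1 : ZMod k) * χ (-1 : ZMod k) = 1 := by
    rw [← map_mul]
    norm_num
  have hεcases : χ (-1 : ZMod k) = 1 ∨ χ (-1 : ZMod k) = -1 := mul_self_eq_one_iff.mp hεsq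
  have hconjneg : conjChar χ (-1 : ZMod k) = χ (-1 : ZMod k) := by
    rw [conjChar_apply]
    rcases hεcases with h | h <;> rw [h] <;> simp
  -- STEP: genB evaluation by parity
  have hterm : ∀ n : ℕ, genB (conjChar χ) (q+1) (-((k:ℝ)*n)/2)
      = (k:ℂ)^q * ((Sa+Sb)/2 + (-1:ℂ)^n * ((Sa-Sb)/2)) := by
    intro n
    have hKP : ((k:ℂ)^(((q+1:ℕ):ℤ)-1)) = (k:ℂ)^q := by
      rw [show ((q+1:ℕ):ℤ)-1 = ((q:ℕ):ℤ) by push_cast; ring, zpow_natCast]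
    rw [genB, hKP]
    rcases Nat.even_or_odd n with ⟨t, ht⟩ | ⟨t, ht⟩
    · have harg : ∀ j : ℕ, pB (q+1) (((j:ℝ) + -((k:ℝ)*n)/2)/k)
          = pB (q+1) ((j:ℝ)/k) := by
        intro j
        rw [show ((j:ℝ) + -((k:ℝ)*n)/2)/k = (j:ℝ)/k + ((-(t:ℤ) : ℤ):ℝ) by
          push_cast [ht]; field_simp; ring]
        exact pB_add_int _ _ _
      have hsum : ∀ j ∈ Finset.range k,
          conjChar (conjChar χ) j * ((pB (q+1) (((j:ℝ) + -((k:ℝ)*n)/2)/k) : ℝ) : ℂ)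
          = χ j * ((pB (q+1) ((j:ℝ)/k) : ℝ) : ℂ) := by
        intro j _
        rw [conjChar_conjChar_apply, harg]
      rw [Finset.sum_congr rfl hsum, ← hSa]
      rw [show (-1:ℂ)^n = 1 from Even.neg_one_pow ⟨t, ht⟩]
      ring
    · have harg : ∀ j : ℕ, pB (q+1) (((j:ℝ) + -((k:ℝ)*n)/2)/k)
          = pB (q+1) ((j:ℝ)/k + 1/2) := by
        intro j
        rw [show ((j:ℝ) + -((k:ℝ)*n)/2)/k = ((j:ℝ)/k + 1/2) + ((-((t:ℤ)+1) : ℤ):ℝ) by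
          push_cast [ht]; field_simp; ring]
        exact pB_add_int _ _ _
      have hsum : ∀ j ∈ Finset.range k,
          conjChar (conjChar χ) j * ((pB (q+1) (((j:ℝ) + -((k:ℝ)*n)/2)/k) : ℝ) : ℂ)
          = χ j * ((pB (q+1) ((j:ℝ)/k + 1/2) : ℝ) : ℂ) := by
        intro j _
        rw [conjChar_conjChar_apply, harg]
      rw [Finset.sum_congr rfl hsum, ← hSb]
      rw [show (-1:ℂ)^n = -1 from Odd.neg_one_pow ⟨t, ht⟩]
      ring
  -- STEP 1 : main sum decomposition
  have step1 : (∑ n ∈ Finset.Icc 1 k, conjChar χ n * genB (conjChar χ) (q + 1) (-((k : ℝ) * n) / 2) *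
        ((pE (m - 1) ((n : ℝ) / k) : ℝ) : ℂ))
      = (k:ℂ)^q * ((Sa+Sb)/2 * T + (Sa-Sb)/2 * U) := by
    rw [sum_Icc_eq_range k (by omega)
      (fun n => conjChar χ n * genB (conjChar χ) (q + 1) (-((k : ℝ) * n) / 2) *
        ((pE (m - 1) ((n : ℝ) / k) : ℝ) : ℂ))
      (by simp [hcχ0]) (by simp [ZMod.natCast_self, hcχ0])]
    have hsum : ∀ n ∈ Finset.range k,
        conjChar χ n * genB (conjChar χ) (q + 1) (-((k : ℝ) * n) / 2) *
          ((pE (m - 1) ((n : ℝ) / k) : ℝ) : ℂ)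
        = ((k:ℂ)^q * ((Sa+Sb)/2)) * (conjChar χ n * ((pE (m-1) ((n:ℝ)/k) : ℝ) : ℂ))
          + ((k:ℂ)^q * ((Sa-Sb)/2)) * ((-1:ℂ)^n * conjChar χ n * ((pE (m-1) ((n:ℝ)/k) : ℝ) : ℂ)) := by
      intro n _
      rw [hterm n]
      ring
    rw [Finset.sum_congr rfl hsum, Finset.sum_add_distrib, ← Finset.mul_sum, ← Finset.mul_sum,
      ← hT, ← hU]
    ring
  -- STEP 2 : vanishing
  -- reflection identities
  have hχrefl : ∀ j : ℕ, 1 ≤ j → j ≤ k-1 → χ ((k-j : ℕ)) = χ (-1 : ZMod k) * χ j := by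
    intro j h1 h2
    rw [hcastZ j (by omega), show -((j:ℕ) : ZMod k) = (-1) * ((j:ℕ) : ZMod k) by ring, map_mul]
  have hcχrefl : ∀ j : ℕ, 1 ≤ j → j ≤ k-1 →
      conjChar χ ((k-j : ℕ)) = χ (-1 : ZMod k) * conjChar χ j := by
    intro j h1 h2
    rw [hcastZ j (by omega), show -((j:ℕ) : ZMod k) = (-1) * ((j:ℕ) : ZMod k) by ring, map_mul,
      hconjneg]
  have hSa_refl : Sa = (χ (-1 : ZMod k) * (-1:ℂ)^(q+1)) * Sa := by
    have h1 : Sa = ∑ j ∈ Finset.Icc 1 (k-1), χ j * ((pB (q+1) ((j:ℝ)/k) : ℝ) : ℂ) := by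
      rw [hSa, sum_range_eq_Icc k _ (by simp [hχ00])]
    nth_rewrite 1 [h1, sum_reflect]
    have hptw : ∀ j ∈ Finset.Icc 1 (k-1),
        χ ((k-j:ℕ)) * ((pB (q+1) (((k-j:ℕ):ℝ)/k) : ℝ) : ℂ)
        = (χ (-1 : ZMod k) * (-1:ℂ)^(q+1)) * (χ j * ((pB (q+1) ((j:ℝ)/k) : ℝ) : ℂ)) := by
      intro j hj
      rw [Finset.mem_Icc] at hj
      have hpB : pB (q+1) (((k-j:ℕ):ℝ)/k) = (-1:ℝ)^(q+1) * pB (q+1) ((j:ℝ)/k) := by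
        rw [hcastR j (by omega),
          show ((k:ℝ) - j)/k = -((j:ℝ)/k) + ((1:ℤ):ℝ) by push_cast; field_simp; ring,
          pB_add_int, pB_neg (hfr j hj.1 hj.2)]
      rw [hχrefl j hj.1 hj.2, hpB]
      push_cast
      ring
    rw [Finset.sum_congr rfl hptw, ← Finset.mul_sum, ← h1]
  have hSb_refl : Sb = (χ (-1 : ZMod k) * (-1:ℂ)^(q+1)) * Sb := by
    have h1 : Sb = ∑ j ∈ Finset.Icc 1 (k-1), χ j * ((pB (q+1) ((j:ℝ)/k + 1/2) : ℝ) : ℂ) := by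
      rw [hSb, sum_range_eq_Icc k _ (by simp [hχ00])]
    nth_rewrite 1 [h1, sum_reflect]
    have hptw : ∀ j ∈ Finset.Icc 1 (k-1),
        χ ((k-j:ℕ)) * ((pB (q+1) (((k-j:ℕ):ℝ)/k + 1/2) : ℝ) : ℂ)
        = (χ (-1 : ZMod k) * (-1:ℂ)^(q+1)) * (χ j * ((pB (q+1) ((j:ℝ)/k + 1/2) : ℝ) : ℂ)) := by
      intro j hj
      rw [Finset.mem_Icc] at hj
      have hpB : pB (q+1) (((k-j:ℕ):ℝ)/k + 1/2) = (-1:ℝ)^(q+1) * pB (q+1) ((j:ℝ)/k + 1/2) := by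
        rw [hcastR j (by omega),
          show ((k:ℝ) - j)/k + 1/2 = -((j:ℝ)/k - 1/2) + ((1:ℤ):ℝ) by push_cast; field_simp; ring,
          pB_add_int, pB_neg (hfr2 j hj.1 hj.2),
          show (j:ℝ)/k + 1/2 = ((j:ℝ)/k - 1/2) + ((1:ℤ):ℝ) by push_cast; ring,
          pB_add_int]
      rw [hχrefl j hj.1 hj.2, hpB]
      push_cast
      ring
    rw [Finset.sum_congr rfl hptw, ← Finset.mul_sum, ← h1]
  have hT_refl : T = (χ (-1 : ZMod k) * (-1:ℂ)^(m-1)) * T := by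
    have h1 : T = ∑ j ∈ Finset.Icc 1 (k-1), conjChar χ j * ((pE (m-1) ((j:ℝ)/k) : ℝ) : ℂ) := by
      rw [hT, sum_range_eq_Icc k _ (by simp [hcχ0])]
    nth_rewrite 1 [h1, sum_reflect]
    have hptw : ∀ j ∈ Finset.Icc 1 (k-1),
        conjChar χ ((k-j:ℕ)) * ((pE (m-1) (((k-j:ℕ):ℝ)/k) : ℝ) : ℂ)
        = (χ (-1 : ZMod k) * (-1:ℂ)^(m-1)) * (conjChar χ j * ((pE (m-1) ((j:ℝ)/k) : ℝ) : ℂ)) := by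
      intro j hj
      rw [Finset.mem_Icc] at hj
      have hpE : pE (m-1) (((k-j:ℕ):ℝ)/k) = (-1:ℝ)^(m-1) * pE (m-1) ((j:ℝ)/k) := by
        have hb1 := hjk_pos j hj.1
        have hb2 := hjk_lt j hj.2
        rw [hcastR j (by omega),
          show ((k:ℝ) - j)/k = 1 - (j:ℝ)/k by field_simp,
          pE_of_Ico (by linarith) (by linarith), eulerPoly_one_sub,
          pE_of_Ico (le_of_lt hb1) hb2]
      rw [hcχrefl j hj.1 hj.2, hpE]
      push_cast
      ring
    rw [Finset.sum_congr rfl hptw, ← Finset.mul_sum, ← h1]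
  have step2 : (Sa + Sb) * T = 0 := by
    have hab : (χ (-1 : ZMod k) * (-1:ℂ)^(q+1)) * (χ (-1 : ZMod k) * (-1:ℂ)^(m-1)) = -1 := by
      have h1 : (-1:ℂ)^(q+1) * (-1:ℂ)^(m-1) = (-1:ℂ)^p := by
        rw [← pow_add, show q+1+(m-1) = p by omega]
      calc (χ (-1 : ZMod k) * (-1:ℂ)^(q+1)) * (χ (-1 : ZMod k) * (-1:ℂ)^(m-1))
          = (χ (-1 : ZMod k) * χ (-1 : ZMod k)) * ((-1:ℂ)^(q+1) * (-1:ℂ)^(m-1)) := by ring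
        _ = (-1:ℂ)^p := by rw [hεsq, h1, one_mul]
        _ = -1 := hp.neg_one_pow
    by_cases hA : (χ (-1 : ZMod k) * (-1:ℂ)^(q+1)) = 1
    · have hb : (χ (-1 : ZMod k) * (-1:ℂ)^(m-1)) = -1 := by
        rw [hA, one_mul] at hab
        exact hab
      rw [hb] at hT_refl
      have h2T : (2:ℂ) * T = 0 := by linear_combination hT_refl
      have hT0 : T = 0 := by
        rcases mul_eq_zero.mp h2T with h | h
        · exact absurd h two_ne_zero
        · exact h
      rw [hT0, mul_zero]
    · have h2 : (1 - (χ (-1 : ZMod k) * (-1:ℂ)^(q+1))) ≠ 0 := by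
        intro h
        exact hA (by linear_combination -h)
      have hSa0 : Sa = 0 := by
        have h3 : (1 - (χ (-1 : ZMod k) * (-1:ℂ)^(q+1))) * Sa = 0 := by
          linear_combination hSa_refl
        rcases mul_eq_zero.mp h3 with h | h
        · exact absurd h h2
        · exact h
      have hSb0 : Sb = 0 := by
        have h3 : (1 - (χ (-1 : ZMod k) * (-1:ℂ)^(q+1))) * Sb = 0 := by
          linear_combination hSb_refl
        rcases mul_eq_zero.mp h3 with h | h
        · exact absurd h h2
        · exact h
      rw [hSa0, hSb0, add_zero, zero_mul]
  -- STEP 3 : difference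
  have hdouble : ∑ j ∈ Finset.range k, χ j * ((pE q (2*((j:ℝ)/k)) : ℝ) : ℂ)
      = conjChar χ 2 * V := by
    have key : ∀ j ∈ Finset.range k, χ j * ((pE q (2*((j:ℝ)/k)) : ℝ) : ℂ)
        = conjChar χ 2 * ((-1:ℂ)^((2*j)%k) * χ (((2*j)%k : ℕ)) *
            ((pE q ((((2*j)%k : ℕ):ℝ)/k) : ℝ) : ℂ)) := by
      intro j hj
      rw [Finset.mem_range] at hj
      set j' := (2*j) % k with hj'
      set e := (2*j) / k with he
      have hde : k * e + j' = 2*j := Nat.div_add_mod (2*j) k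
      have hχ2 : conjChar χ 2 * χ ((j' : ℕ)) = χ j := by
        have hc1 : ((j' : ℕ) : ZMod k) = 2 * ((j:ℕ) : ZMod k) := by
          rw [hj', ZMod.natCast_mod]
          push_cast
          ring
        rw [hc1, map_mul, ← mul_assoc, conjChar_mul_self χ h2u, one_mul]
      have hr : 2*((j:ℝ)/k) = ((j':ℕ):ℝ)/k + ((e:ℕ):ℝ) := by
        have hcast : 2*(j:ℝ) = (k:ℝ)*e + j' := by exact_mod_cast congrArg (Nat.cast (R := ℝ)) hde.symm
        field_simp
        linarith
      have hpar : ((-1:ℝ))^e = (-1:ℝ)^j' := by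
        have h2j : Even (k*e + j') := by rw [hde]; exact even_two_mul j
        have hke : Even (k*e) ↔ Even e := by
          rw [Nat.even_mul]
          have : ¬ Even k := Nat.not_even_iff_odd.mpr hk
          tauto
        have hiff : Even e ↔ Even j' := by rw [← hke]; exact Nat.even_add.mp h2j
        rcases Nat.even_or_odd e with h | h
        · rw [Even.neg_one_pow h, Even.neg_one_pow (hiff.mp h)]
        · have hj'odd : Odd j' := by
            rcases Nat.even_or_odd j' with h2 | h2
            · exact absurd (hiff.mpr h2) (Nat.not_even_iff_odd.mpr h)
            · exact h2
          rw [Odd.neg_one_pow h, Odd.neg_one_pow hj'odd]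
      rw [hr, pE_add_nat, hpar]
      rw [← hχ2]
      push_cast
      ring
    rw [Finset.sum_congr rfl key, ← Finset.mul_sum]
    congr 1
    rw [hV]
    have hhalf : (k+1)/2*2 = k+1 := by omega
    refine Finset.sum_nbij' (i := fun a => (2*a)%k) (j := fun a => (((k+1)/2)*a)%k)
      (fun a _ => Finset.mem_range.mpr (Nat.mod_lt _ (by omega)))
      (fun a _ => Finset.mem_range.mpr (Nat.mod_lt _ (by omega)))
      ?_ ?_ (fun a _ => rfl)
    · intro a ha
      rw [Finset.mem_range] at ha
      show ((k+1)/2 * ((2*a)%k)) % k = a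
      have h1 : ((k+1)/2 * ((2*a)%k)) % k = ((k+1)/2 * (2*a)) % k :=
        ((Nat.mod_modEq (2*a) k).mul_left ((k+1)/2))
      have h2 : (k+1)/2 * (2*a) = a + k * a := by
        rw [show (k+1)/2*(2*a) = ((k+1)/2*2)*a by ring, hhalf]
        ring
      rw [h1, h2, Nat.add_mul_mod_self_left, Nat.mod_eq_of_lt ha]
    · intro a ha
      rw [Finset.mem_range] at ha
      show (2 * (((k+1)/2*a)%k)) % k = a
      have h1 : (2 * (((k+1)/2*a)%k)) % k = (2 * ((k+1)/2*a)) % k :=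
        ((Nat.mod_modEq ((k+1)/2*a) k).mul_left 2)
      have h2 : 2 * ((k+1)/2*a) = a + k * a := by
        rw [show 2*((k+1)/2*a) = ((k+1)/2*2)*a by ring, hhalf]
        ring
      rw [h1, h2, Nat.add_mul_mod_self_left, Nat.mod_eq_of_lt ha]
  have step3 : Sb - Sa = (((q:ℂ)+1)/2^(q+1)) * conjChar χ 2 * V := by
    have h1 : Sb - Sa = ∑ j ∈ Finset.range k,
        χ j * (((pB (q+1) ((j:ℝ)/k + 1/2) - pB (q+1) ((j:ℝ)/k) : ℝ)) : ℂ) := by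
      rw [hSa, hSb, ← Finset.sum_sub_distrib]
      apply Finset.sum_congr rfl
      intro j _
      push_cast
      ring
    have h2 : ∀ j ∈ Finset.range k,
        χ j * (((pB (q+1) ((j:ℝ)/k + 1/2) - pB (q+1) ((j:ℝ)/k) : ℝ)) : ℂ)
        = (((q:ℂ)+1)/2^(q+1)) * (χ j * ((pE q (2*((j:ℝ)/k)) : ℝ) : ℂ)) := by
      intro j hj
      rw [Finset.mem_range] at hj
      rcases Nat.eq_zero_or_pos j with rfl | hj1
      · simp only [Nat.cast_zero, hχ00]
        ring
      · rw [pB_half_diff q (hjk_pos j hj1) (hjk_lt j (by omega)) (hjk_ne_half j)]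
        push_cast
        ring
    rw [h1, Finset.sum_congr rfl h2, ← Finset.mul_sum, hdouble]
    ring
  -- STEP 4
  have step4 : genE (conjChar χ) q ((k:ℕ):ℝ) = -((k:ℂ)^q * V) := by
    rw [genE]
    have hsum : ∀ j ∈ Finset.range k,
        (-1:ℂ)^j * conjChar (conjChar χ) j * ((pE q (((j:ℝ) + ((k:ℕ):ℝ))/k) : ℝ) : ℂ)
        = -((-1:ℂ)^j * χ j * ((pE q ((j:ℝ)/k) : ℝ) : ℂ)) := by
      intro j _
      rw [conjChar_conjChar_apply]
      rw [show ((j:ℝ) + ((k:ℕ):ℝ))/k = (j:ℝ)/k + ((1:ℕ):ℝ) by push_cast; field_simp,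
        pE_add_nat]
      push_cast
      ring
    rw [Finset.sum_congr rfl hsum, Finset.sum_neg_distrib, ← hV]
    ring
  -- STEP 5
  have step5 : genE χ (m-1) (0:ℝ) = (k:ℂ)^(m-1) * U := by
    rw [genE]
    congr 1
    apply Finset.sum_congr rfl
    intro j _
    rw [add_zero]
  -- final assembly
  rw [step1, step4, step5]
  have hzero : (Sa+Sb)/2 * T = 0 := by
    rw [div_mul_eq_mul_div, step2, zero_div]
  rw [hzero, zero_add]
  have hSab : Sa - Sb = -((((q:ℂ)+1)/2^(q+1)) * conjChar χ 2 * V) := by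
    rw [← step3]; ring
  rw [hSab]
  have hc1 : ((q+1:ℕ):ℂ) = (q:ℂ)+1 := by push_cast; ring
  have hzk : (k:ℂ)^((1:ℤ)-(m:ℤ)) = ((k:ℂ)^((m-1:ℕ)))⁻¹ := by
    rw [show (1:ℤ)-(m:ℤ) = -(((m-1:ℕ)):ℤ) by push_cast [Nat.cast_sub hm1]; ring,
      zpow_neg, zpow_natCast]
  have hz2 : (2:ℂ)^((m:ℤ)-(p:ℤ)-2) = ((2:ℂ)^(q+2))⁻¹ := by
    rw [show (m:ℤ)-(p:ℤ)-2 = -(((q+2:ℕ)):ℤ) by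
        push_cast [hqdef, Nat.cast_sub hmp]; ring,
      zpow_neg, zpow_natCast]
  rw [hzk, hz2, hc1]
  have h2C : (2:ℂ) ≠ 0 := two_ne_zero
  have hkm : ((k:ℂ)^((m-1:ℕ))) ≠ 0 := pow_ne_zero _ hkC
  field_simp
  ring
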